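/- Proposition (essential-value-prop, assertion 4): for every 0 ≤ j ≤ n, the value η_j lies in the subgroup of ℤ generated by the set {η_i : 0 ≤ i ≤ j and (i = 0 or α_i > 1)} (i.e. every key value lies in the group generated by the essential key values of smaller or equal index). -/

import Mathlib

/-- `x` is a ℤ-linear combination of the `η i` for `i ∈ S`. -/
def IsComb (η : ℕ → ℤ) (S : Finset ℕ) (x : ℤ) : Prop :=
  ∃ β : ℕ → ℤ, x = ∑ i ∈ S, β i * η i

lemma isComb_zero (η : ℕ → ℤ) (S : Finset ℕ) : IsComb η S 0 :=
  ⟨0, by simp⟩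

lemma isComb_add {η : ℕ → ℤ} {S : Finset ℕ} {x y : ℤ}
    (hx : IsComb η S x) (hy : IsComb η S y) : IsComb η S (x + y) := by
  obtain ⟨β, hβ⟩ := hx
  obtain ⟨γ, hγ⟩ := hy
  exact ⟨β + γ, by simp [hβ, hγ, add_mul, Finset.sum_add_distrib]⟩

lemma isComb_smul {η : ℕ → ℤ} {S : Finset ℕ} {x : ℤ} (c : ℤ)
    (hx : IsComb η S x) : IsComb η S (c * x) := by
  obtain ⟨β, hβ⟩ := hx
  exact ⟨fun i => c * β i, by simp [hβ, Finset.mul_sum, mul_assoc]⟩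

lemma isComb_mem {η : ℕ → ℤ} {S : Finset ℕ} {i : ℕ} (hi : i ∈ S) :
    IsComb η S (η i) := by
  refine ⟨fun k => if k = i then 1 else 0, ?_⟩
  rw [Finset.sum_eq_single i]
  · simp
  · intro b _ hb; simp [hb]
  · intro h; exact absurd hi h

lemma isComb_mono {η : ℕ → ℤ} {S T : Finset ℕ} (hST : S ⊆ T) {x : ℤ}
    (hx : IsComb η S x) : IsComb η T x := by
  obtain ⟨β, hβ⟩ := hx
  refine ⟨fun i => if i ∈ S then β i else 0, ?_⟩
  rw [hβ]
  calc ∑ i ∈ S, β i * η i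
      = ∑ i ∈ S, (if i ∈ S then β i else 0) * η i :=
        Finset.sum_congr rfl (fun i hi => by simp [hi])
    _ = ∑ i ∈ T, (if i ∈ S then β i else 0) * η i :=
        Finset.sum_subset hST (fun i _ hi => by simp [hi])

lemma isComb_sum {η : ℕ → ℤ} {S : Finset ℕ} {F : Finset ℕ} {g : ℕ → ℤ}
    (h : ∀ i ∈ F, IsComb η S (g i)) : IsComb η S (∑ i ∈ F, g i) := by
  classical
  induction F using Finset.induction_on with
  | empty => simpa using isComb_zero η S
  | insert _ _ hni ih =>
    rw [Finset.sum_insert hni]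
    exact isComb_add (h _ (Finset.mem_insert_self _ _))
      (ih fun i hi => h i (Finset.mem_insert_of_mem hi))

/-- Proposition `essential-value-prop`, assertion (4): let `η₀, …, η_{n+1}` be the values of
the key forms of a semidegree (so `η₀ > 0`, and for `1 ≤ j ≤ n` the number `A j` is the
least positive integer `α` with `α·η_j ∈ ℤη₀ + ⋯ + ℤη_{j-1}`, which automatically lies in
that subgroup). Then for every `0 ≤ j ≤ n`, the value `η_j` lies in the subgroup of `ℤ`
generated by the essential key values of index `≤ j` (those `η_i` with `i = 0` or `A i > 1`). -/
theorem key_value_in_essential_subgroup (n : ℕ) (η : ℕ → ℤ) (hη0 : 0 < η 0)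
    (A : ℕ → ℤ)
    (hA : ∀ j, 1 ≤ j → j ≤ n →
      IsLeast {α : ℤ | 0 < α ∧ ∃ β : ℕ → ℤ,
        α * η j = ∑ i ∈ Finset.range j, β i * η i} (A j)) :
    ∀ j, j ≤ n → ∃ β : ℕ → ℤ,
      η j = ∑ i ∈ (Finset.range (j + 1)).filter (fun i => i = 0 ∨ 1 < A i), β i * η i := by
  intro j
  induction j using Nat.strong_induction_on with
  | _ j ih =>
    intro hjn
    set S : ℕ → Finset ℕ :=
      fun j => (Finset.range (j + 1)).filter (fun i => i = 0 ∨ 1 < A i) with hS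
    show IsComb η (S j) (η j)
    rcases Nat.eq_zero_or_pos j with rfl | hj
    · exact isComb_mem (by simp [hS])
    · obtain ⟨⟨hpos, β, hβ⟩, -⟩ := hA j hj hjn
      rcases lt_or_ge 1 (A j) with hA1 | hA1
      · exact isComb_mem (by simp [hS, Finset.mem_filter, Finset.mem_range, hA1])
      · have hAj : A j = 1 := le_antisymm hA1 hpos
        rw [hAj, one_mul] at hβ
        rw [hβ]
        refine isComb_sum fun i hi => ?_
        rw [Finset.mem_range] at hi
        refine isComb_smul _ (isComb_mono ?_ (ih i hi (le_trans (le_of_lt hi) hjn)))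
        apply Finset.filter_subset_filter
        exact Finset.range_subset_range.2 (by omega)
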